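/- Every positive definite symmetric integer matrix of size 3×3 with determinant 1 is GL₃(ℤ)-equivalent to the identity matrix I₃. -/

import Mathlib

open Matrix

private def MV0 (k l : ℤ) : Matrix (Fin 3) (Fin 3) ℤ := !![1,0,0;k,1,0;l,0,1]
private def MV1 (k l : ℤ) : Matrix (Fin 3) (Fin 3) ℤ := !![1,k,0;0,1,0;0,l,1]
private def MV2 (k l : ℤ) : Matrix (Fin 3) (Fin 3) ℤ := !![1,0,k;0,1,l;0,0,1]

private lemma detMV0 (k l : ℤ) : (MV0 k l).det = 1 := by
  simp [MV0, Matrix.det_fin_three, Matrix.vecHead, Matrix.vecTail]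
private lemma detMV1 (k l : ℤ) : (MV1 k l).det = 1 := by
  simp [MV1, Matrix.det_fin_three, Matrix.vecHead, Matrix.vecTail]
private lemma detMV2 (k l : ℤ) : (MV2 k l).det = 1 := by
  simp [MV2, Matrix.det_fin_three, Matrix.vecHead, Matrix.vecTail]

private lemma trMV0 (A : Matrix (Fin 3) (Fin 3) ℤ) (k l : ℤ) :
    ((MV0 k l)ᵀ * A * (MV0 k l)).trace
      = A.trace + (k^2*A 1 1 + l^2*A 2 2 + k*l*(A 1 2 + A 2 1) + k*(A 0 1 + A 1 0) + l*(A 0 2 + A 2 0)) := by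
  simp [MV0, Matrix.trace_fin_three, Matrix.mul_apply, Fin.sum_univ_three,
    Matrix.transpose_apply, Matrix.vecHead, Matrix.vecTail]
  ring

private lemma trMV1 (A : Matrix (Fin 3) (Fin 3) ℤ) (k l : ℤ) :
    ((MV1 k l)ᵀ * A * (MV1 k l)).trace
      = A.trace + (k^2*A 0 0 + l^2*A 2 2 + k*l*(A 0 2 + A 2 0) + k*(A 0 1 + A 1 0) + l*(A 1 2 + A 2 1)) := by
  simp [MV1, Matrix.trace_fin_three, Matrix.mul_apply, Fin.sum_univ_three,
    Matrix.transpose_apply, Matrix.vecHead, Matrix.vecTail]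
  ring

private lemma trMV2 (A : Matrix (Fin 3) (Fin 3) ℤ) (k l : ℤ) :
    ((MV2 k l)ᵀ * A * (MV2 k l)).trace
      = A.trace + (k^2*A 0 0 + l^2*A 1 1 + k*l*(A 0 1 + A 1 0) + k*(A 0 2 + A 2 0) + l*(A 1 2 + A 2 1)) := by
  simp [MV2, Matrix.trace_fin_three, Matrix.mul_apply, Fin.sum_univ_three,
    Matrix.transpose_apply, Matrix.vecHead, Matrix.vecTail]
  ring

private lemma quadCongr (A M : Matrix (Fin 3) (Fin 3) ℤ) (v : Fin 3 → ℤ) :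
    v ⬝ᵥ (Mᵀ * A * M).mulVec v = (M.mulVec v) ⬝ᵥ A.mulVec (M.mulVec v) := by
  simp [Matrix.mul_apply, Matrix.mulVec, dotProduct, Fin.sum_univ_three]
  ring

/-- integer positive definiteness -/
private def HPQ (A : Matrix (Fin 3) (Fin 3) ℤ) : Prop :=
  ∀ v : Fin 3 → ℤ, v ≠ 0 → 0 < v ⬝ᵥ A.mulVec v

private lemma diag_pos (A : Matrix (Fin 3) (Fin 3) ℤ) (hH : HPQ A) (i : Fin 3) :
    0 < A i i := by
  have h := hH (fun j => if j = i then 1 else 0) (by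
    intro h
    have := congrFun h i
    simp at this)
  fin_cases i <;>
    simpa [Matrix.mulVec, dotProduct, Fin.sum_univ_three] using h

/-- Minkowski-type bound, case `pqr ≥ 0`. -/
private lemma lemA (a b c p q r : ℤ) (ha : 0 ≤ a) (hab : a ≤ b) (hbc : b ≤ c)
    (h1 : 0 ≤ a - 2*p) (h2 : 0 ≤ a + 2*p) (h3 : 0 ≤ b - 2*p) (h4 : 0 ≤ b + 2*p)
    (h5 : 0 ≤ a - 2*q) (h6 : 0 ≤ a + 2*q) (h7 : 0 ≤ c - 2*q) (h8 : 0 ≤ c + 2*q)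
    (h9 : 0 ≤ b - 2*r) (h10 : 0 ≤ b + 2*r) (h11 : 0 ≤ c - 2*r) (h12 : 0 ≤ c + 2*r)
    (hpqr : 0 ≤ p*q*r) :
    a*b*c ≤ 4*(a*b*c - c*p^2 - b*q^2 - a*r^2 + 2*p*q*r) := by
  have hb : (0:ℤ) ≤ b := by linarith
  have hc : (0:ℤ) ≤ c := by linarith
  nlinarith [mul_nonneg hc (mul_nonneg h1 h4), mul_nonneg hc (mul_nonneg h2 h3),
    mul_nonneg hb (mul_nonneg h5 h8), mul_nonneg hb (mul_nonneg h6 h7),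
    mul_nonneg ha (mul_nonneg h9 h12), mul_nonneg ha (mul_nonneg h10 h11)]

/-- Minkowski-type bound, case `pqr < 0` (stated for nonnegative `u,v,w = 2|p|,2|q|,2|r|`). -/
private lemma minkAux (a b c u v w : ℤ) (ha : 0 ≤ a) (hab : a ≤ b) (hbc : b ≤ c)
    (hu0 : 0 ≤ u) (hv0 : 0 ≤ v) (hw0 : 0 ≤ w)
    (hu1 : u ≤ a) (hv1 : v ≤ a)
    (hw1 : w ≤ b) (hsum : u + v + w ≤ a + b) :
    c*u^2 + b*v^2 + a*w^2 + u*v*w ≤ 3*(a*b*c) := by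
  nlinarith [mul_nonneg (mul_nonneg hu0 hv0) (by linarith : (0:ℤ) ≤ c - w),
    mul_nonneg (mul_nonneg (by linarith : (0:ℤ) ≤ c) hu0) (by linarith : (0:ℤ) ≤ a + b - w - u - v),
    mul_nonneg (mul_nonneg (by linarith : (0:ℤ) ≤ c) (by linarith : (0:ℤ) ≤ a - u)) (by linarith : (0:ℤ) ≤ a + b - w),
    mul_nonneg (mul_nonneg ha hw0) (by linarith : (0:ℤ) ≤ c - w),
    mul_nonneg (mul_nonneg ha (by linarith : (0:ℤ) ≤ c)) (by linarith : (0:ℤ) ≤ b - a),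
    mul_nonneg (mul_nonneg (by linarith : (0:ℤ) ≤ b) (by linarith : (0:ℤ) ≤ a - v)) (by linarith : (0:ℤ) ≤ c - v),
    mul_nonneg (mul_nonneg (by linarith : (0:ℤ) ≤ b) hv0) (by linarith : (0:ℤ) ≤ a - v),
    mul_nonneg (mul_nonneg (by linarith : (0:ℤ) ≤ b) hv0) (by linarith : (0:ℤ) ≤ c - v)]

set_option maxHeartbeats 1600000 in
/-- a reduced, sorted, unimodular positive form is the unit form. -/
private lemma keySorted (a b c p q r : ℤ) (ha : 1 ≤ a) (hab : a ≤ b) (hbc : b ≤ c)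
    (h1 : 0 ≤ a - 2*p) (h2 : 0 ≤ a + 2*p) (h3 : 0 ≤ b - 2*p) (h4 : 0 ≤ b + 2*p)
    (h5 : 0 ≤ a - 2*q) (h6 : 0 ≤ a + 2*q) (h7 : 0 ≤ c - 2*q) (h8 : 0 ≤ c + 2*q)
    (h9 : 0 ≤ b - 2*r) (h10 : 0 ≤ b + 2*r) (h11 : 0 ≤ c - 2*r) (h12 : 0 ≤ c + 2*r)
    (hs1 : 0 ≤ a + b + 2*p + 2*q + 2*r) (hs2 : 0 ≤ a + b + 2*p - 2*q - 2*r)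
    (hs3 : 0 ≤ a + b - 2*p + 2*q - 2*r) (hs4 : 0 ≤ a + b - 2*p - 2*q + 2*r)
    (hdet : a*b*c - c*p^2 - b*q^2 - a*r^2 + 2*p*q*r = 1) :
    a = 1 ∧ b = 1 ∧ c = 1 ∧ p = 0 ∧ q = 0 ∧ r = 0 := by
  have ha0 : (0:ℤ) ≤ a := by linarith
  have habc4 : a*b*c ≤ 4 := by
    rcases le_or_gt 0 (p*q*r) with hpqr | hpqr
    · have := lemA a b c p q r ha0 hab hbc h1 h2 h3 h4 h5 h6 h7 h8 h9 h10 h11 h12 hpqr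
      rw [hdet] at this
      linarith
    · rcases le_or_gt 0 p with hp | hp <;> rcases le_or_gt 0 q with hq | hq <;>
        rcases le_or_gt 0 r with hr | hr
      · linarith [mul_nonneg (mul_nonneg hp hq) hr]
      · -- p ≥ 0, q ≥ 0, r < 0
        have := minkAux a b c (2*p) (2*q) (-(2*r)) ha0 hab hbc (by linarith) (by linarith)
          (by linarith) (by linarith) (by linarith) (by linarith) (by linarith)
        linarith [this, hdet]
      · -- p ≥ 0, q < 0, r ≥ 0
        have := minkAux a b c (2*p) (-(2*q)) (2*r) ha0 hab hbc (by linarith) (by linarith)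
          (by linarith) (by linarith) (by linarith) (by linarith) (by linarith)
        linarith [this, hdet]
      · -- p ≥ 0, q < 0, r < 0 : pqr ≥ 0
        linarith [mul_nonneg hp (mul_pos_of_neg_of_neg hq hr).le, mul_assoc p q r]
      · -- p < 0, q ≥ 0, r ≥ 0
        have := minkAux a b c (-(2*p)) (2*q) (2*r) ha0 hab hbc (by linarith) (by linarith)
          (by linarith) (by linarith) (by linarith) (by linarith) (by linarith)
        linarith [this, hdet]
      · -- p < 0, q ≥ 0, r < 0 : pqr ≥ 0
        nlinarith [mul_nonneg (mul_pos_of_neg_of_neg hp hr).le hq]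
      · -- p < 0, q < 0, r ≥ 0 : pqr ≥ 0
        nlinarith [mul_nonneg (mul_pos_of_neg_of_neg hp hq).le hr]
      · -- p < 0, q < 0, r < 0
        have := minkAux a b c (-(2*p)) (-(2*q)) (-(2*r)) ha0 hab hbc (by linarith) (by linarith)
          (by linarith) (by linarith) (by linarith) (by linarith) (by linarith)
        linarith [this, hdet]
  have ha1 : a = 1 := by
    by_contra hne
    have h2a : 2 ≤ a := by omega
    have h2b : 2 ≤ b := by linarith
    have h2c : 2 ≤ c := by linarith
    have h4ab : 4 ≤ a*b := by nlinarith
    have : 8 ≤ a*b*c := by nlinarith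
    linarith
  subst ha1
  have hp0 : p = 0 := by omega
  have hq0 : q = 0 := by omega
  subst hp0; subst hq0
  have hbc' : b*c - r^2 = 1 := by linear_combination hdet
  have hb1 : b = 1 := by
    by_contra hne
    have h2b : 2 ≤ b := by omega
    nlinarith [mul_nonneg h9 h10, mul_nonneg (by linarith : (0:ℤ) ≤ b) (by linarith : (0:ℤ) ≤ c - b)]
  subst hb1
  have hr0 : r = 0 := by omega
  subst hr0
  have hc1 : c = 1 := by linarith
  exact ⟨rfl, rfl, hc1, rfl, rfl, rfl⟩

set_option maxHeartbeats 1600000 in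
/-- unsorted version, by sorting the diagonal. -/
private lemma keyRed (a b c p q r : ℤ) (ha : 1 ≤ a) (hb : 1 ≤ b) (hc : 1 ≤ c)
    (pa1 : 0 ≤ a - 2*p) (pa2 : 0 ≤ a + 2*p) (pb1 : 0 ≤ b - 2*p) (pb2 : 0 ≤ b + 2*p)
    (qa1 : 0 ≤ a - 2*q) (qa2 : 0 ≤ a + 2*q) (qc1 : 0 ≤ c - 2*q) (qc2 : 0 ≤ c + 2*q)
    (rb1 : 0 ≤ b - 2*r) (rb2 : 0 ≤ b + 2*r) (rc1 : 0 ≤ c - 2*r) (rc2 : 0 ≤ c + 2*r)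
    (s2a : 0 ≤ a + b + 2*p + 2*q + 2*r) (s2b : 0 ≤ a + b + 2*p - 2*q - 2*r)
    (s2c : 0 ≤ a + b - 2*p + 2*q - 2*r) (s2d : 0 ≤ a + b - 2*p - 2*q + 2*r)
    (s1a : 0 ≤ a + c + 2*q + 2*p + 2*r) (s1b : 0 ≤ a + c + 2*q - 2*p - 2*r)
    (s1c : 0 ≤ a + c - 2*q + 2*p - 2*r) (s1d : 0 ≤ a + c - 2*q - 2*p + 2*r)
    (s0a : 0 ≤ b + c + 2*r + 2*p + 2*q) (s0b : 0 ≤ b + c + 2*r - 2*p - 2*q)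
    (s0c : 0 ≤ b + c - 2*r + 2*p - 2*q) (s0d : 0 ≤ b + c - 2*r - 2*p + 2*q)
    (hdet : a*b*c - c*p^2 - b*q^2 - a*r^2 + 2*p*q*r = 1) :
    a = 1 ∧ b = 1 ∧ c = 1 ∧ p = 0 ∧ q = 0 ∧ r = 0 := by
  rcases le_total a b with oab | oab <;> rcases le_total a c with oac | oac <;>
    rcases le_total b c with obc | obc
  · exact keySorted a b c p q r (by linarith) (by linarith) (by linarith)
      (by linarith) (by linarith) (by linarith) (by linarith) (by linarith) (by linarith)
      (by linarith) (by linarith) (by linarith) (by linarith) (by linarith) (by linarith)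
      (by linarith) (by linarith) (by linarith) (by linarith)
      (by linear_combination hdet)
  · -- a ≤ c ≤ b : order a c b, (p',q',r') = (q,p,r)
    obtain ⟨e1, e2, e3, e4, e5, e6⟩ := keySorted a c b q p r (by linarith) (by linarith) (by linarith)
      (by linarith) (by linarith) (by linarith) (by linarith) (by linarith) (by linarith)
      (by linarith) (by linarith) (by linarith) (by linarith) (by linarith) (by linarith)
      (by linarith) (by linarith) (by linarith) (by linarith)
      (by linear_combination hdet)
    exact ⟨e1, e3, e2, e5, e4, e6⟩
  · -- c ≤ a ≤ b and b ≤ c : all equal; use order a b c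
    exact keySorted a b c p q r (by linarith) (by linarith) (by linarith)
      (by linarith) (by linarith) (by linarith) (by linarith) (by linarith) (by linarith)
      (by linarith) (by linarith) (by linarith) (by linarith) (by linarith) (by linarith)
      (by linarith) (by linarith) (by linarith) (by linarith)
      (by linear_combination hdet)
  · -- c ≤ a ≤ b : order c a b, (p',q',r') = (q,r,p)
    obtain ⟨e1, e2, e3, e4, e5, e6⟩ := keySorted c a b q r p (by linarith) (by linarith) (by linarith)
      (by linarith) (by linarith) (by linarith) (by linarith) (by linarith) (by linarith)
      (by linarith) (by linarith) (by linarith) (by linarith) (by linarith) (by linarith)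
      (by linarith) (by linarith) (by linarith) (by linarith)
      (by linear_combination hdet)
    exact ⟨e2, e3, e1, e6, e4, e5⟩
  · -- b ≤ a ≤ c : order b a c, (p',q',r') = (p,r,q)
    obtain ⟨e1, e2, e3, e4, e5, e6⟩ := keySorted b a c p r q (by linarith) (by linarith) (by linarith)
      (by linarith) (by linarith) (by linarith) (by linarith) (by linarith) (by linarith)
      (by linarith) (by linarith) (by linarith) (by linarith) (by linarith) (by linarith)
      (by linarith) (by linarith) (by linarith) (by linarith)
      (by linear_combination hdet)
    exact ⟨e2, e1, e3, e4, e6, e5⟩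
  · -- b ≤ a, a ≤ c, c ≤ b : all equal; use order b a c
    obtain ⟨e1, e2, e3, e4, e5, e6⟩ := keySorted b a c p r q (by linarith) (by linarith) (by linarith)
      (by linarith) (by linarith) (by linarith) (by linarith) (by linarith) (by linarith)
      (by linarith) (by linarith) (by linarith) (by linarith) (by linarith) (by linarith)
      (by linarith) (by linarith) (by linarith) (by linarith)
      (by linear_combination hdet)
    exact ⟨e2, e1, e3, e4, e6, e5⟩
  · -- b ≤ c ≤ a : order b c a, (p',q',r') = (r,p,q)
    obtain ⟨e1, e2, e3, e4, e5, e6⟩ := keySorted b c a r p q (by linarith) (by linarith) (by linarith)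
      (by linarith) (by linarith) (by linarith) (by linarith) (by linarith) (by linarith)
      (by linarith) (by linarith) (by linarith) (by linarith) (by linarith) (by linarith)
      (by linarith) (by linarith) (by linarith) (by linarith)
      (by linear_combination hdet)
    exact ⟨e3, e1, e2, e5, e6, e4⟩
  · -- c ≤ b ≤ a : order c b a, (p',q',r') = (r,q,p)
    obtain ⟨e1, e2, e3, e4, e5, e6⟩ := keySorted c b a r q p (by linarith) (by linarith) (by linarith)
      (by linarith) (by linarith) (by linarith) (by linarith) (by linarith) (by linarith)
      (by linarith) (by linarith) (by linarith) (by linarith) (by linarith) (by linarith)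
      (by linarith) (by linarith) (by linarith) (by linarith)
      (by linear_combination hdet)
    exact ⟨e3, e2, e1, e6, e5, e4⟩


private lemma descend_step (n : ℕ)
    (ih : ∀ B : Matrix (Fin 3) (Fin 3) ℤ, Bᵀ = B → HPQ B → B.det = 1 → B.trace.toNat ≤ n →
      ∃ T : Matrix (Fin 3) (Fin 3) ℤ, (T.det = 1 ∨ T.det = -1) ∧ Tᵀ * B * T = 1)
    (A : Matrix (Fin 3) (Fin 3) ℤ) (hs : Aᵀ = A) (hH : HPQ A) (hd : A.det = 1)
    (htr : A.trace.toNat ≤ n + 1)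
    (M : Matrix (Fin 3) (Fin 3) ℤ) (hM : M.det = 1)
    (hlt : (Mᵀ * A * M).trace < A.trace) :
    ∃ T : Matrix (Fin 3) (Fin 3) ℤ, (T.det = 1 ∨ T.det = -1) ∧ Tᵀ * A * T = 1 := by
  set B := Mᵀ * A * M with hB
  have hBs : Bᵀ = B := by
    rw [hB, Matrix.transpose_mul, Matrix.transpose_mul, Matrix.transpose_transpose, hs,
      Matrix.mul_assoc]
  have hBH : HPQ B := by
    intro v hv
    have hMv : M.mulVec v ≠ 0 := by
      intro h0
      apply hv
      have h1 := congrArg (fun w => (M.adjugate).mulVec w) h0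
      simpa [Matrix.mulVec_mulVec, Matrix.adjugate_mul, hM] using h1
    have := hH (M.mulVec v) hMv
    rw [hB, quadCongr]
    exact this
  have hBd : B.det = 1 := by
    rw [hB, Matrix.det_mul, Matrix.det_mul, Matrix.det_transpose, hM, hd]
    norm_num
  have hBtr : B.trace.toNat ≤ n := by
    have h1 : B.trace < A.trace := hlt
    omega
  obtain ⟨T, hTd, hTe⟩ := ih B hBs hBH hBd hBtr
  refine ⟨M * T, ?_, ?_⟩
  · rcases hTd with h | h
    · left; rw [Matrix.det_mul, hM, h]; norm_num
    · right; rw [Matrix.det_mul, hM, h]; norm_num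
  · rw [Matrix.transpose_mul]
    calc Tᵀ * Mᵀ * A * (M * T) = Tᵀ * (Mᵀ * A * M) * T := by
          simp only [Matrix.mul_assoc]
      _ = 1 := hTe

set_option maxHeartbeats 3200000 in
private lemma mainLoop : ∀ (n : ℕ) (A : Matrix (Fin 3) (Fin 3) ℤ), Aᵀ = A → HPQ A →
    A.det = 1 → A.trace.toNat ≤ n →
    ∃ T : Matrix (Fin 3) (Fin 3) ℤ, (T.det = 1 ∨ T.det = -1) ∧ Tᵀ * A * T = 1 := by
  intro n
  induction n with
  | zero =>
    intro A hs hH hd htr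
    exfalso
    have h0 := diag_pos A hH 0
    have h1 := diag_pos A hH 1
    have h2 := diag_pos A hH 2
    have ht : A.trace = A 0 0 + A 1 1 + A 2 2 := Matrix.trace_fin_three A
    omega
  | succ n ih =>
    intro A hs hH hd htr
    have e10 : A 0 1 = A 1 0 := by
      have := congrFun (congrFun hs 1) 0
      simpa using this
    have e20 : A 0 2 = A 2 0 := by
      have := congrFun (congrFun hs 2) 0
      simpa using this
    have e21 : A 1 2 = A 2 1 := by
      have := congrFun (congrFun hs 2) 1
      simpa using this
    by_cases hc1 : ((MV0 (1) (0))ᵀ * A * (MV0 (1) (0))).trace < A.trace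
    · exact descend_step n ih A hs hH hd htr _ (detMV0 (1) (0)) hc1
    rw [not_lt, trMV0] at hc1
    by_cases hc2 : ((MV0 (-1) (0))ᵀ * A * (MV0 (-1) (0))).trace < A.trace
    · exact descend_step n ih A hs hH hd htr _ (detMV0 (-1) (0)) hc2
    rw [not_lt, trMV0] at hc2
    by_cases hc3 : ((MV0 (0) (1))ᵀ * A * (MV0 (0) (1))).trace < A.trace
    · exact descend_step n ih A hs hH hd htr _ (detMV0 (0) (1)) hc3
    rw [not_lt, trMV0] at hc3
    by_cases hc4 : ((MV0 (0) (-1))ᵀ * A * (MV0 (0) (-1))).trace < A.trace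
    · exact descend_step n ih A hs hH hd htr _ (detMV0 (0) (-1)) hc4
    rw [not_lt, trMV0] at hc4
    by_cases hc5 : ((MV0 (1) (1))ᵀ * A * (MV0 (1) (1))).trace < A.trace
    · exact descend_step n ih A hs hH hd htr _ (detMV0 (1) (1)) hc5
    rw [not_lt, trMV0] at hc5
    by_cases hc6 : ((MV0 (1) (-1))ᵀ * A * (MV0 (1) (-1))).trace < A.trace
    · exact descend_step n ih A hs hH hd htr _ (detMV0 (1) (-1)) hc6
    rw [not_lt, trMV0] at hc6
    by_cases hc7 : ((MV0 (-1) (1))ᵀ * A * (MV0 (-1) (1))).trace < A.trace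
    · exact descend_step n ih A hs hH hd htr _ (detMV0 (-1) (1)) hc7
    rw [not_lt, trMV0] at hc7
    by_cases hc8 : ((MV0 (-1) (-1))ᵀ * A * (MV0 (-1) (-1))).trace < A.trace
    · exact descend_step n ih A hs hH hd htr _ (detMV0 (-1) (-1)) hc8
    rw [not_lt, trMV0] at hc8
    by_cases hc9 : ((MV1 (1) (0))ᵀ * A * (MV1 (1) (0))).trace < A.trace
    · exact descend_step n ih A hs hH hd htr _ (detMV1 (1) (0)) hc9
    rw [not_lt, trMV1] at hc9
    by_cases hc10 : ((MV1 (-1) (0))ᵀ * A * (MV1 (-1) (0))).trace < A.trace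
    · exact descend_step n ih A hs hH hd htr _ (detMV1 (-1) (0)) hc10
    rw [not_lt, trMV1] at hc10
    by_cases hc11 : ((MV1 (0) (1))ᵀ * A * (MV1 (0) (1))).trace < A.trace
    · exact descend_step n ih A hs hH hd htr _ (detMV1 (0) (1)) hc11
    rw [not_lt, trMV1] at hc11
    by_cases hc12 : ((MV1 (0) (-1))ᵀ * A * (MV1 (0) (-1))).trace < A.trace
    · exact descend_step n ih A hs hH hd htr _ (detMV1 (0) (-1)) hc12
    rw [not_lt, trMV1] at hc12
    by_cases hc13 : ((MV1 (1) (1))ᵀ * A * (MV1 (1) (1))).trace < A.trace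
    · exact descend_step n ih A hs hH hd htr _ (detMV1 (1) (1)) hc13
    rw [not_lt, trMV1] at hc13
    by_cases hc14 : ((MV1 (1) (-1))ᵀ * A * (MV1 (1) (-1))).trace < A.trace
    · exact descend_step n ih A hs hH hd htr _ (detMV1 (1) (-1)) hc14
    rw [not_lt, trMV1] at hc14
    by_cases hc15 : ((MV1 (-1) (1))ᵀ * A * (MV1 (-1) (1))).trace < A.trace
    · exact descend_step n ih A hs hH hd htr _ (detMV1 (-1) (1)) hc15
    rw [not_lt, trMV1] at hc15
    by_cases hc16 : ((MV1 (-1) (-1))ᵀ * A * (MV1 (-1) (-1))).trace < A.trace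
    · exact descend_step n ih A hs hH hd htr _ (detMV1 (-1) (-1)) hc16
    rw [not_lt, trMV1] at hc16
    by_cases hc17 : ((MV2 (1) (0))ᵀ * A * (MV2 (1) (0))).trace < A.trace
    · exact descend_step n ih A hs hH hd htr _ (detMV2 (1) (0)) hc17
    rw [not_lt, trMV2] at hc17
    by_cases hc18 : ((MV2 (-1) (0))ᵀ * A * (MV2 (-1) (0))).trace < A.trace
    · exact descend_step n ih A hs hH hd htr _ (detMV2 (-1) (0)) hc18
    rw [not_lt, trMV2] at hc18
    by_cases hc19 : ((MV2 (0) (1))ᵀ * A * (MV2 (0) (1))).trace < A.trace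
    · exact descend_step n ih A hs hH hd htr _ (detMV2 (0) (1)) hc19
    rw [not_lt, trMV2] at hc19
    by_cases hc20 : ((MV2 (0) (-1))ᵀ * A * (MV2 (0) (-1))).trace < A.trace
    · exact descend_step n ih A hs hH hd htr _ (detMV2 (0) (-1)) hc20
    rw [not_lt, trMV2] at hc20
    by_cases hc21 : ((MV2 (1) (1))ᵀ * A * (MV2 (1) (1))).trace < A.trace
    · exact descend_step n ih A hs hH hd htr _ (detMV2 (1) (1)) hc21
    rw [not_lt, trMV2] at hc21
    by_cases hc22 : ((MV2 (1) (-1))ᵀ * A * (MV2 (1) (-1))).trace < A.trace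
    · exact descend_step n ih A hs hH hd htr _ (detMV2 (1) (-1)) hc22
    rw [not_lt, trMV2] at hc22
    by_cases hc23 : ((MV2 (-1) (1))ᵀ * A * (MV2 (-1) (1))).trace < A.trace
    · exact descend_step n ih A hs hH hd htr _ (detMV2 (-1) (1)) hc23
    rw [not_lt, trMV2] at hc23
    by_cases hc24 : ((MV2 (-1) (-1))ᵀ * A * (MV2 (-1) (-1))).trace < A.trace
    · exact descend_step n ih A hs hH hd htr _ (detMV2 (-1) (-1)) hc24
    rw [not_lt, trMV2] at hc24
    -- terminal case: all 24 reduction conditions hold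
    have hdd : A.det = A 0 0 * A 1 1 * A 2 2 - A 0 0 * A 1 2 * A 2 1 - A 0 1 * A 1 0 * A 2 2
        + A 0 1 * A 1 2 * A 2 0 + A 0 2 * A 1 0 * A 2 1 - A 0 2 * A 1 1 * A 2 0 :=
      Matrix.det_fin_three A
    rw [hd] at hdd
    obtain ⟨e1, e2, e3, e4, e5, e6⟩ := keyRed (A 0 0) (A 1 1) (A 2 2) (A 0 1) (A 0 2) (A 1 2)
      (diag_pos A hH 0) (diag_pos A hH 1) (diag_pos A hH 2)
      (by linarith [hc1, hc2, hc3, hc4, hc5, hc6, hc7, hc8, hc9, hc10, hc11, hc12, hc13, hc14, hc15, hc16, hc17, hc18, hc19, hc20, hc21, hc22, hc23, hc24, e10, e20, e21])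
      (by linarith [hc1, hc2, hc3, hc4, hc5, hc6, hc7, hc8, hc9, hc10, hc11, hc12, hc13, hc14, hc15, hc16, hc17, hc18, hc19, hc20, hc21, hc22, hc23, hc24, e10, e20, e21])
      (by linarith [hc1, hc2, hc3, hc4, hc5, hc6, hc7, hc8, hc9, hc10, hc11, hc12, hc13, hc14, hc15, hc16, hc17, hc18, hc19, hc20, hc21, hc22, hc23, hc24, e10, e20, e21])
      (by linarith [hc1, hc2, hc3, hc4, hc5, hc6, hc7, hc8, hc9, hc10, hc11, hc12, hc13, hc14, hc15, hc16, hc17, hc18, hc19, hc20, hc21, hc22, hc23, hc24, e10, e20, e21])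
      (by linarith [hc1, hc2, hc3, hc4, hc5, hc6, hc7, hc8, hc9, hc10, hc11, hc12, hc13, hc14, hc15, hc16, hc17, hc18, hc19, hc20, hc21, hc22, hc23, hc24, e10, e20, e21])
      (by linarith [hc1, hc2, hc3, hc4, hc5, hc6, hc7, hc8, hc9, hc10, hc11, hc12, hc13, hc14, hc15, hc16, hc17, hc18, hc19, hc20, hc21, hc22, hc23, hc24, e10, e20, e21])
      (by linarith [hc1, hc2, hc3, hc4, hc5, hc6, hc7, hc8, hc9, hc10, hc11, hc12, hc13, hc14, hc15, hc16, hc17, hc18, hc19, hc20, hc21, hc22, hc23, hc24, e10, e20, e21])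
      (by linarith [hc1, hc2, hc3, hc4, hc5, hc6, hc7, hc8, hc9, hc10, hc11, hc12, hc13, hc14, hc15, hc16, hc17, hc18, hc19, hc20, hc21, hc22, hc23, hc24, e10, e20, e21])
      (by linarith [hc1, hc2, hc3, hc4, hc5, hc6, hc7, hc8, hc9, hc10, hc11, hc12, hc13, hc14, hc15, hc16, hc17, hc18, hc19, hc20, hc21, hc22, hc23, hc24, e10, e20, e21])
      (by linarith [hc1, hc2, hc3, hc4, hc5, hc6, hc7, hc8, hc9, hc10, hc11, hc12, hc13, hc14, hc15, hc16, hc17, hc18, hc19, hc20, hc21, hc22, hc23, hc24, e10, e20, e21])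
      (by linarith [hc1, hc2, hc3, hc4, hc5, hc6, hc7, hc8, hc9, hc10, hc11, hc12, hc13, hc14, hc15, hc16, hc17, hc18, hc19, hc20, hc21, hc22, hc23, hc24, e10, e20, e21])
      (by linarith [hc1, hc2, hc3, hc4, hc5, hc6, hc7, hc8, hc9, hc10, hc11, hc12, hc13, hc14, hc15, hc16, hc17, hc18, hc19, hc20, hc21, hc22, hc23, hc24, e10, e20, e21])
      (by linarith [hc1, hc2, hc3, hc4, hc5, hc6, hc7, hc8, hc9, hc10, hc11, hc12, hc13, hc14, hc15, hc16, hc17, hc18, hc19, hc20, hc21, hc22, hc23, hc24, e10, e20, e21])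
      (by linarith [hc1, hc2, hc3, hc4, hc5, hc6, hc7, hc8, hc9, hc10, hc11, hc12, hc13, hc14, hc15, hc16, hc17, hc18, hc19, hc20, hc21, hc22, hc23, hc24, e10, e20, e21])
      (by linarith [hc1, hc2, hc3, hc4, hc5, hc6, hc7, hc8, hc9, hc10, hc11, hc12, hc13, hc14, hc15, hc16, hc17, hc18, hc19, hc20, hc21, hc22, hc23, hc24, e10, e20, e21])
      (by linarith [hc1, hc2, hc3, hc4, hc5, hc6, hc7, hc8, hc9, hc10, hc11, hc12, hc13, hc14, hc15, hc16, hc17, hc18, hc19, hc20, hc21, hc22, hc23, hc24, e10, e20, e21])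
      (by linarith [hc1, hc2, hc3, hc4, hc5, hc6, hc7, hc8, hc9, hc10, hc11, hc12, hc13, hc14, hc15, hc16, hc17, hc18, hc19, hc20, hc21, hc22, hc23, hc24, e10, e20, e21])
      (by linarith [hc1, hc2, hc3, hc4, hc5, hc6, hc7, hc8, hc9, hc10, hc11, hc12, hc13, hc14, hc15, hc16, hc17, hc18, hc19, hc20, hc21, hc22, hc23, hc24, e10, e20, e21])
      (by linarith [hc1, hc2, hc3, hc4, hc5, hc6, hc7, hc8, hc9, hc10, hc11, hc12, hc13, hc14, hc15, hc16, hc17, hc18, hc19, hc20, hc21, hc22, hc23, hc24, e10, e20, e21])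
      (by linarith [hc1, hc2, hc3, hc4, hc5, hc6, hc7, hc8, hc9, hc10, hc11, hc12, hc13, hc14, hc15, hc16, hc17, hc18, hc19, hc20, hc21, hc22, hc23, hc24, e10, e20, e21])
      (by linarith [hc1, hc2, hc3, hc4, hc5, hc6, hc7, hc8, hc9, hc10, hc11, hc12, hc13, hc14, hc15, hc16, hc17, hc18, hc19, hc20, hc21, hc22, hc23, hc24, e10, e20, e21])
      (by linarith [hc1, hc2, hc3, hc4, hc5, hc6, hc7, hc8, hc9, hc10, hc11, hc12, hc13, hc14, hc15, hc16, hc17, hc18, hc19, hc20, hc21, hc22, hc23, hc24, e10, e20, e21])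
      (by linarith [hc1, hc2, hc3, hc4, hc5, hc6, hc7, hc8, hc9, hc10, hc11, hc12, hc13, hc14, hc15, hc16, hc17, hc18, hc19, hc20, hc21, hc22, hc23, hc24, e10, e20, e21])
      (by linarith [hc1, hc2, hc3, hc4, hc5, hc6, hc7, hc8, hc9, hc10, hc11, hc12, hc13, hc14, hc15, hc16, hc17, hc18, hc19, hc20, hc21, hc22, hc23, hc24, e10, e20, e21])
      (by rw [← e10, ← e20, ← e21] at hdd; linear_combination hdd.symm)
    refine ⟨1, Or.inl (by simp), ?_⟩
    rw [Matrix.transpose_one, Matrix.one_mul, Matrix.mul_one]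
    rw [Matrix.eta_fin_three A, e1, e2, e3, e4, e5, e6, ← e10, ← e20, ← e21, e4, e5, e6]
    exact (Matrix.one_fin_three).symm

theorem stmt14 (A : Matrix (Fin 3) (Fin 3) ℤ) (hsymm : Aᵀ = A)
    (hpos : (A.map (Int.cast : ℤ → ℝ)).PosDef) (hdet : A.det = 1) :
    ∃ T : Matrix (Fin 3) (Fin 3) ℤ, (T.det = 1 ∨ T.det = -1) ∧
      Tᵀ * A * T = 1 := by
  have hH : HPQ A := by
    intro v hv
    have hx : (fun i => (v i : ℝ)) ≠ 0 := by
      intro h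
      apply hv
      funext i
      have := congrFun h i
      simpa using this
    have h2 := hpos.dotProduct_mulVec_pos hx
    have hcast : ((v ⬝ᵥ A.mulVec v : ℤ) : ℝ)
        = star (fun i => (v i : ℝ)) ⬝ᵥ (A.map (Int.cast : ℤ → ℝ)).mulVec (fun i => (v i : ℝ)) := by
      simp [Matrix.mulVec, dotProduct, Fin.sum_univ_three, Matrix.map_apply]
      try push_cast
      try ring
    have : (0:ℝ) < ((v ⬝ᵥ A.mulVec v : ℤ) : ℝ) := by rw [hcast]; exact h2
    exact_mod_cast this
  exact mainLoop A.trace.toNat A hsymm hH hdet le_rfl
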